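/- arXiv:1605.05474 — 4 statements merged into one kernel-verified Lean document; each statement's English description precedes it below -/
import Mathlib

section
/- Let T: H → 2^H be maximal monotone and c > 0. Then every element z of H can be written in exactly one way as z = x + c·y with y ∈ T(x). -/
open Filter Topology

namespace MintyAux

variable {H : Type*} [NormedAddCommGroup H] [InnerProductSpace ℝ H]

/-- The affine functional underlying the Fitzpatrick function. -/
noncomputable def L (a b x y : H) : ℝ :=
  (inner ℝ x b : ℝ) + (inner ℝ a y : ℝ) - (inner ℝ a b : ℝ)

/-- The set of values whose supremum is the Fitzpatrick function. -/
def lset (S : H → Set H) (x y : H) : Set ℝ :=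
  {r | ∃ a b, b ∈ S a ∧ r = L a b x y}

/-- The Fitzpatrick function of `S`. -/
noncomputable def F (S : H → Set H) (x y : H) : ℝ := sSup (lset S x y)

/-- The strongly convex perturbation of the Fitzpatrick function. -/
noncomputable def k (S : H → Set H) (x y : H) : ℝ :=
  F S x y + (‖x‖ ^ 2 + ‖y‖ ^ 2) / 2

lemma mem_lset {S : H → Set H} {a b : H} (hb : b ∈ S a) (x y : H) :
    L a b x y ∈ lset S x y := ⟨a, b, hb, rfl⟩

lemma lset_nonempty {S : H → Set H} {a₀ b₀ : H} (h : b₀ ∈ S a₀) (x y : H) :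
    (lset S x y).Nonempty := ⟨_, mem_lset h x y⟩

lemma L_self (x y : H) : L x y x y = (inner ℝ x y : ℝ) := by
  simp [L, real_inner_comm]

/-- The affine functional is affine in `(x, y)`. -/
lemma L_combo (a b x₁ y₁ x₂ y₂ : H) (t : ℝ) :
    L a b ((1 - t) • x₁ + t • x₂) ((1 - t) • y₁ + t • y₂)
      = (1 - t) * L a b x₁ y₁ + t * L a b x₂ y₂ := by
  simp only [L, inner_add_left, inner_add_right, real_inner_smul_left,
    real_inner_smul_right]
  ring

/-- On the graph, the Fitzpatrick value set is bounded above by `⟪a,b⟫`. -/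
lemma bddAbove_lset_graph {S : H → Set H}
    (hmono : ∀ z z' w w', w ∈ S z → w' ∈ S z' → 0 ≤ (inner ℝ (z - z') (w - w') : ℝ))
    {a b : H} (hb : b ∈ S a) : (inner ℝ a b : ℝ) ∈ upperBounds (lset S a b) := by
  rintro r ⟨a', b', hb', rfl⟩
  have h := hmono a a' b b' hb hb'
  have hexp : (inner ℝ (a - a') (b - b') : ℝ)
      = (inner ℝ a b : ℝ) - L a' b' a b := by
    simp only [L, inner_sub_left, inner_sub_right]
    ring
  linarith [hexp ▸ h]

lemma F_graph {S : H → Set H}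
    (hmono : ∀ z z' w w', w ∈ S z → w' ∈ S z' → 0 ≤ (inner ℝ (z - z') (w - w') : ℝ))
    {a b : H} (hb : b ∈ S a) : F S a b = (inner ℝ a b : ℝ) := by
  refine le_antisymm (csSup_le (lset_nonempty hb a b) (bddAbove_lset_graph hmono hb)) ?_
  have := le_csSup ⟨_, bddAbove_lset_graph hmono hb⟩ (mem_lset hb a b)
  rwa [L_self] at this

lemma F_ge {S : H → Set H}
    (hmax : ∀ z w, (∀ z' w', w' ∈ S z' → 0 ≤ (inner ℝ (z - z') (w - w') : ℝ)) → w ∈ S z)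
    {x y : H} (hbdd : BddAbove (lset S x y)) :
    (inner ℝ x y : ℝ) ≤ F S x y := by
  by_cases hy : y ∈ S x
  · have := le_csSup hbdd (mem_lset hy x y)
    rwa [L_self] at this
  · have h : ¬ ∀ z' w', w' ∈ S z' → 0 ≤ (inner ℝ (x - z') (y - w') : ℝ) :=
      fun h => hy (hmax x y h)
    push_neg at h
    obtain ⟨a, b, hb, hneg⟩ := h
    have hexp : (inner ℝ (x - a) (y - b) : ℝ) = (inner ℝ x y : ℝ) - L a b x y := by
      simp only [L, inner_sub_left, inner_sub_right]
      ring
    have h2 := le_csSup hbdd (mem_lset hb x y)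
    have : (inner ℝ x y : ℝ) < L a b x y := by linarith [hexp ▸ hneg]
    exact le_of_lt (lt_of_lt_of_le this h2)

/-- Convexity of the Fitzpatrick function along segments within the bounded set. -/
lemma F_combo {S : H → Set H} {a₀ b₀ : H} (hg : b₀ ∈ S a₀)
    {x₁ y₁ x₂ y₂ : H} (h₁ : BddAbove (lset S x₁ y₁)) (h₂ : BddAbove (lset S x₂ y₂))
    {t : ℝ} (ht0 : 0 ≤ t) (ht1 : t ≤ 1) :
    BddAbove (lset S ((1 - t) • x₁ + t • x₂) ((1 - t) • y₁ + t • y₂)) ∧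
      F S ((1 - t) • x₁ + t • x₂) ((1 - t) • y₁ + t • y₂)
        ≤ (1 - t) * F S x₁ y₁ + t * F S x₂ y₂ := by
  have hub : (1 - t) * F S x₁ y₁ + t * F S x₂ y₂ ∈
      upperBounds (lset S ((1 - t) • x₁ + t • x₂) ((1 - t) • y₁ + t • y₂)) := by
    rintro r ⟨a, b, hb, rfl⟩
    rw [L_combo]
    have e₁ := le_csSup h₁ (mem_lset hb x₁ y₁)
    have e₂ := le_csSup h₂ (mem_lset hb x₂ y₂)
    have h1t : 0 ≤ 1 - t := by linarith
    exact add_le_add (mul_le_mul_of_nonneg_left e₁ h1t) (mul_le_mul_of_nonneg_left e₂ ht0)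
  exact ⟨⟨_, hub⟩, csSup_le (lset_nonempty hg _ _) hub⟩

lemma norm_combo_sq (x a : H) (t : ℝ) :
    ‖(1 - t) • x + t • a‖ ^ 2
      = ‖x‖ ^ 2 + 2 * t * (inner ℝ x (a - x) : ℝ) + t ^ 2 * ‖a - x‖ ^ 2 := by
  have h : (1 - t) • x + t • a = x + t • (a - x) := by module
  rw [h, norm_add_sq_real, real_inner_smul_right, norm_smul, Real.norm_eq_abs,
    mul_pow, sq_abs]
  ring

lemma norm_midpoint_sq (x₁ x₂ : H) :
    ‖(1/2 : ℝ) • x₁ + (1/2 : ℝ) • x₂‖ ^ 2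
      = (‖x₁‖ ^ 2 + ‖x₂‖ ^ 2) / 2 - ‖x₁ - x₂‖ ^ 2 / 4 := by
  have h : (1/2 : ℝ) • x₁ + (1/2 : ℝ) • x₂ = (1/2 : ℝ) • (x₁ + x₂) := by module
  rw [h, norm_smul, Real.norm_eq_abs, mul_pow, sq_abs, norm_add_sq_real,
    norm_sub_sq_real]
  ring

lemma nonneg_of_small (B C : ℝ) (h : ∀ t : ℝ, 0 < t → t ≤ 1 → 0 ≤ t * B + t ^ 2 * C) :
    0 ≤ B := by
  have key : ∀ n : ℕ, 0 ≤ B + (1 / (n + 1)) * C := by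
    intro n
    have ht0 : (0 : ℝ) < 1 / (n + 1) := by positivity
    have ht1 : (1 : ℝ) / (n + 1) ≤ 1 := by
      rw [div_le_one (by positivity)]
      exact le_add_of_nonneg_left (Nat.cast_nonneg n)
    have := h _ ht0 ht1
    nlinarith [this, ht0]
  have htend : Tendsto (fun n : ℕ => B + (1 / (n + 1)) * C) atTop (𝓝 B) := by
    have h0 := tendsto_one_div_add_atTop_nhds_zero_nat (𝕜 := ℝ)
    have := (h0.mul_const C).const_add B
    simpa using this
  have := ge_of_tendsto' htend key
  linarith [this]


lemma minty_zero {H : Type*} [NormedAddCommGroup H] [InnerProductSpace ℝ H]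
    [CompleteSpace H] (S : H → Set H)
    (hmono : ∀ z z' w w', w ∈ S z → w' ∈ S z' → 0 ≤ (inner ℝ (z - z') (w - w') : ℝ))
    (hmax : ∀ z w, (∀ z' w', w' ∈ S z' → 0 ≤ (inner ℝ (z - z') (w - w') : ℝ)) → w ∈ S z) :
    ∃ x y, y ∈ S x ∧ x + y = 0 := by
  classical
  -- the graph is nonempty
  obtain ⟨a₀, b₀, hg⟩ : ∃ a b, b ∈ S a := by
    by_contra h
    push_neg at h
    exact h 0 0 (hmax 0 0 fun z' w' hw' => absurd hw' (h z' w'))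
  -- the infimum of the perturbed Fitzpatrick function
  set Kset : Set ℝ := {r | ∃ x y, BddAbove (lset S x y) ∧ r = k S x y} with hKset
  have hKne : Kset.Nonempty :=
    ⟨k S a₀ b₀, a₀, b₀, ⟨_, bddAbove_lset_graph hmono hg⟩, rfl⟩
  have klb : ∀ x y : H, BddAbove (lset S x y) → ‖x + y‖ ^ 2 / 2 ≤ k S x y := by
    intro x y h
    have h1 := F_ge hmax h
    have h2 := norm_add_sq_real x y
    simp only [k]
    linarith
  have hKbdd : BddBelow Kset := by
    refine ⟨0, ?_⟩
    rintro r ⟨x, y, h, rfl⟩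
    have := klb x y h
    nlinarith [sq_nonneg ‖x + y‖]
  set m : ℝ := sInf Kset with hm
  have hm_le : ∀ x y : H, BddAbove (lset S x y) → m ≤ k S x y := by
    intro x y h
    exact csInf_le hKbdd ⟨x, y, h, rfl⟩
  -- minimizing sequence
  have hseq : ∀ n : ℕ, ∃ p : H × H,
      BddAbove (lset S p.1 p.2) ∧ k S p.1 p.2 < m + 1 / (n + 1) := by
    intro n
    have hpos : (0 : ℝ) < 1 / (n + 1) := by positivity
    obtain ⟨r, hrK, hrlt⟩ := Real.lt_sInf_add_pos hKne hpos
    obtain ⟨x, y, hA, rfl⟩ := hrK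
    exact ⟨(x, y), hA, hrlt⟩
  choose p hp1 hp2 using hseq
  set xs : ℕ → H := fun n => (p n).1 with hxs
  set ys : ℕ → H := fun n => (p n).2 with hys
  -- midpoint estimate (strong convexity)
  have hmid : ∀ x₁ y₁ x₂ y₂ : H, BddAbove (lset S x₁ y₁) → BddAbove (lset S x₂ y₂) →
      ‖x₁ - x₂‖ ^ 2 + ‖y₁ - y₂‖ ^ 2 ≤ 4 * k S x₁ y₁ + 4 * k S x₂ y₂ - 8 * m := by
    intro x₁ y₁ x₂ y₂ h₁ h₂
    obtain ⟨hA, hF⟩ := F_combo hg h₁ h₂ (t := 1/2) (by norm_num) (by norm_num)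
    have h3 := hm_le _ _ hA
    have e1 := norm_midpoint_sq x₁ x₂
    have e2 := norm_midpoint_sq y₁ y₂
    have hhalf : (1 - 1/2 : ℝ) = 1/2 := by norm_num
    rw [hhalf] at hA hF h3
    simp only [k] at h3 ⊢
    rw [e1, e2] at h3
    linarith
  -- the minimizing sequences are Cauchy
  have hbound : ∀ N n n' : ℕ, N ≤ n → N ≤ n' →
      ‖xs n - xs n'‖ ^ 2 + ‖ys n - ys n'‖ ^ 2 ≤ 8 / (N + 1) := by
    intro N n n' hn hn'
    have h1 := hmid _ _ _ _ (hp1 n) (hp1 n')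
    have h2 := hp2 n
    have h3 := hp2 n'
    have h4 : (1 : ℝ) / (n + 1) ≤ 1 / (N + 1) := by
      apply one_div_le_one_div_of_le (by positivity)
      have : (N : ℝ) ≤ n := Nat.cast_le.mpr hn
      linarith
    have h5 : (1 : ℝ) / (n' + 1) ≤ 1 / (N + 1) := by
      apply one_div_le_one_div_of_le (by positivity)
      have : (N : ℝ) ≤ n' := Nat.cast_le.mpr hn'
      linarith
    have h6 : (8 : ℝ) / (N + 1) = 8 * (1 / (N + 1)) := by ring
    simp only [hxs, hys]
    rw [h6]
    linarith
  have hb0 : Tendsto (fun N : ℕ => Real.sqrt (8 / (N + 1))) atTop (𝓝 0) := by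
    have h8 : Tendsto (fun N : ℕ => (8 : ℝ) / (N + 1)) atTop (𝓝 0) := by
      have h0 := (tendsto_one_div_add_atTop_nhds_zero_nat (𝕜 := ℝ)).const_mul (8 : ℝ)
      have heq : (fun N : ℕ => (8 : ℝ) / (N + 1))
          = fun N : ℕ => (1 / ((N : ℝ) + 1)) * 8 := by funext N; ring
      rw [heq]
      simpa [mul_comm] using h0
    have h2 := (Real.continuous_sqrt.tendsto 0).comp h8
    rw [Real.sqrt_zero] at h2
    exact h2
  have hkey : ∀ (s : ℕ → H), (∀ N n n' : ℕ, N ≤ n → N ≤ n' →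
      ‖s n - s n'‖ ^ 2 ≤ 8 / (N + 1)) → ∃ l : H, Tendsto s atTop (𝓝 l) := by
    intro s hs
    have hc : CauchySeq s := by
      refine cauchySeq_of_le_tendsto_0 _ ?_ hb0
      intro n n' N hn hn'
      rw [dist_eq_norm]
      calc ‖s n - s n'‖ = Real.sqrt (‖s n - s n'‖ ^ 2) :=
            (Real.sqrt_sq (norm_nonneg _)).symm
        _ ≤ Real.sqrt (8 / (N + 1)) := Real.sqrt_le_sqrt (hs N n n' hn hn')
    exact cauchySeq_tendsto_of_complete hc
  obtain ⟨xb, hxb⟩ := hkey xs fun N n n' hn hn' => by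
    nlinarith [hbound N n n' hn hn', sq_nonneg ‖ys n - ys n'‖]
  obtain ⟨yb, hyb⟩ := hkey ys fun N n n' hn hn' => by
    nlinarith [hbound N n n' hn hn', sq_nonneg ‖xs n - xs n'‖]
  -- the limit is a minimizer
  have hlim : ∀ a b : H, b ∈ S a →
      L a b xb yb + (‖xb‖ ^ 2 + ‖yb‖ ^ 2) / 2 ≤ m := by
    intro a b hb
    have hf : Tendsto (fun n => L a b (xs n) (ys n) + (‖xs n‖ ^ 2 + ‖ys n‖ ^ 2) / 2)
        atTop (𝓝 (L a b xb yb + (‖xb‖ ^ 2 + ‖yb‖ ^ 2) / 2)) := by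
      have h1 : Tendsto (fun n => (inner ℝ (xs n) b : ℝ)) atTop (𝓝 (inner ℝ xb b)) :=
        hxb.inner tendsto_const_nhds
      have h2 : Tendsto (fun n => (inner ℝ a (ys n) : ℝ)) atTop (𝓝 (inner ℝ a yb)) :=
        Filter.Tendsto.inner tendsto_const_nhds hyb
      have h3 : Tendsto (fun n => ‖xs n‖ ^ 2) atTop (𝓝 (‖xb‖ ^ 2)) :=
        (hxb.norm.pow 2)
      have h4 : Tendsto (fun n => ‖ys n‖ ^ 2) atTop (𝓝 (‖yb‖ ^ 2)) :=
        (hyb.norm.pow 2)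
      simp only [L]
      exact (((h1.add h2).sub tendsto_const_nhds).add ((h3.add h4).div_const 2))
    have hg' : Tendsto (fun n : ℕ => m + 1 / (n + 1)) atTop (𝓝 (m + 0)) :=
      tendsto_const_nhds.add tendsto_one_div_add_atTop_nhds_zero_nat
    rw [add_zero] at hg'
    refine le_of_tendsto_of_tendsto' hf hg' fun n => ?_
    have hL : L a b (xs n) (ys n) ≤ F S (xs n) (ys n) :=
      le_csSup (hp1 n) (mem_lset hb _ _)
    have := hp2 n
    simp only [k] at this
    simp only [hxs, hys] at hL ⊢
    linarith
  have hAbar : BddAbove (lset S xb yb) := by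
    refine ⟨m - (‖xb‖ ^ 2 + ‖yb‖ ^ 2) / 2, ?_⟩
    rintro r ⟨a, b, hb, rfl⟩
    linarith [hlim a b hb]
  have hFbar : F S xb yb ≤ m - (‖xb‖ ^ 2 + ‖yb‖ ^ 2) / 2 := by
    apply csSup_le (lset_nonempty hg _ _)
    rintro r ⟨a, b, hb, rfl⟩
    linarith [hlim a b hb]
  have hkm : k S xb yb = m := by
    have h1 := hm_le _ _ hAbar
    simp only [k] at h1 ⊢
    linarith
  -- first-order optimality
  have hstar : ∀ a b : H, b ∈ S a →
      0 ≤ (inner ℝ a b : ℝ) - F S xb yb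
        + (inner ℝ xb (a - xb) : ℝ) + (inner ℝ yb (b - yb) : ℝ) := by
    intro a b hb
    apply nonneg_of_small _ ((‖a - xb‖ ^ 2 + ‖b - yb‖ ^ 2) / 2)
    intro t ht0 ht1
    have hAg : BddAbove (lset S a b) := ⟨_, bddAbove_lset_graph hmono hb⟩
    obtain ⟨hAc, hFc⟩ := F_combo hg hAbar hAg (le_of_lt ht0) ht1
    have h3 := hm_le _ _ hAc
    rw [F_graph hmono hb] at hFc
    have e1 := norm_combo_sq xb a t
    have e2 := norm_combo_sq yb b t
    simp only [k] at h3 hkm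
    rw [e1, e2] at h3
    nlinarith [h3, hFc, hkm]
  -- maximality yields the reflected point is in the graph
  have hFb : (inner ℝ xb yb : ℝ) ≤ F S xb yb := F_ge hmax hAbar
  have hmem : (-xb) ∈ S (-yb) := by
    apply hmax
    intro a b hb
    have hB := hstar a b hb
    have hexp : (inner ℝ (-yb - a) (-xb - b) : ℝ)
        = (inner ℝ yb xb : ℝ) + (inner ℝ yb b : ℝ) + (inner ℝ a xb : ℝ) + (inner ℝ a b : ℝ) := by
      simp only [inner_sub_left, inner_sub_right, inner_neg_left, inner_neg_right]
      ring
    rw [hexp]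
    have hc1 : (inner ℝ yb xb : ℝ) = inner ℝ xb yb := real_inner_comm _ _
    have hc2 : (inner ℝ a xb : ℝ) = inner ℝ xb a := real_inner_comm _ _
    have hi1 : (inner ℝ xb (a - xb) : ℝ) = inner ℝ xb a - ‖xb‖ ^ 2 := by
      rw [inner_sub_right, real_inner_self_eq_norm_sq]
    have hi2 : (inner ℝ yb (b - yb) : ℝ) = inner ℝ yb b - ‖yb‖ ^ 2 := by
      rw [inner_sub_right, real_inner_self_eq_norm_sq]
    have hsq := sq_nonneg ‖xb + yb‖
    have hns := norm_add_sq_real xb yb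
    rw [hi1, hi2] at hB
    linarith
  -- conclude x + y = 0
  have hAq : BddAbove (lset S (-yb) (-xb)) := ⟨_, bddAbove_lset_graph hmono hmem⟩
  have hFq : F S (-yb) (-xb) = (inner ℝ xb yb : ℝ) := by
    rw [F_graph hmono hmem, inner_neg_neg, real_inner_comm]
  have hmq : m ≤ k S (-yb) (-xb) := hm_le _ _ hAq
  have hFeq : F S xb yb = (inner ℝ xb yb : ℝ) := by
    simp only [k, hFq, norm_neg] at hmq hkm
    linarith
  obtain ⟨hAm, hFm⟩ := F_combo hg hAbar hAq (t := 1/2) (by norm_num) (by norm_num)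
  have hmm := hm_le _ _ hAm
  have hhalf : (1 - 1/2 : ℝ) = 1/2 := by norm_num
  rw [hhalf] at hAm hFm hmm
  have e1 := norm_midpoint_sq xb (-yb)
  have e2 := norm_midpoint_sq yb (-xb)
  have hz : xb + yb = 0 := by
    have hsub1 : xb - -yb = xb + yb := sub_neg_eq_add _ _
    have hsub2 : yb - -xb = yb + xb := sub_neg_eq_add _ _
    rw [hsub1] at e1
    rw [hsub2, add_comm yb xb] at e2
    simp only [k, norm_neg] at hmm hkm
    rw [e1, e2] at hmm
    simp only [norm_neg] at hmm
    rw [hFeq] at hkm hFm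
    rw [hFq] at hFm
    have hnn : ‖xb + yb‖ ^ 2 ≤ 0 := by linarith
    have := sq_nonneg ‖xb + yb‖
    have : ‖xb + yb‖ ^ 2 = 0 := le_antisymm hnn this
    rw [sq_eq_zero_iff, norm_eq_zero] at this
    exact this
  exact ⟨-yb, -xb, hmem, by rw [← neg_add, add_comm, hz, neg_zero]⟩

end MintyAux

/-- Representation lemma (Minty): for maximal monotone T and c > 0, every z ∈ H can be written
in exactly one way as z = x + c • y with y ∈ T x. -/
theorem representation_lemma_maximal
    {H : Type*} [NormedAddCommGroup H] [InnerProductSpace ℝ H] [CompleteSpace H]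
    (T : H → Set H)
    (hmono : ∀ z z' w w', w ∈ T z → w' ∈ T z' → 0 ≤ (inner ℝ (z - z') (w - w') : ℝ))
    (hmax : ∀ z w, (∀ z' w', w' ∈ T z' → 0 ≤ (inner ℝ (z - z') (w - w') : ℝ)) → w ∈ T z)
    (c : ℝ) (hc : 0 < c) :
    ∀ z : H, ∃! p : H × H, p.2 ∈ T p.1 ∧ z = p.1 + c • p.2 := by
  intro z
  -- the shifted and scaled operator
  set S : H → Set H := fun x => (fun w => c • w - z) '' T x with hS
  have hSmono : ∀ x x' v v', v ∈ S x → v' ∈ S x' → 0 ≤ (inner ℝ (x - x') (v - v') : ℝ) := by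
    rintro x x' v v' ⟨w, hw, rfl⟩ ⟨w', hw', rfl⟩
    have hww := hmono x x' w w' hw hw'
    have he : (c • w - z) - (c • w' - z) = c • (w - w') := by module
    rw [he, real_inner_smul_right]
    positivity
  have hSmax : ∀ x v, (∀ x' v', v' ∈ S x' → 0 ≤ (inner ℝ (x - x') (v - v') : ℝ)) → v ∈ S x := by
    intro x v h
    refine ⟨c⁻¹ • (v + z), hmax x _ ?_, ?_⟩
    · intro x' w' hw'
      have h1 := h x' (c • w' - z) ⟨w', hw', rfl⟩
      have he : c⁻¹ • (v + z) - w' = c⁻¹ • (v - (c • w' - z)) := by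
        rw [smul_sub, smul_sub, smul_add]
        rw [smul_smul, inv_mul_cancel₀ hc.ne', one_smul]
        abel
      rw [he, real_inner_smul_right]
      positivity
    · show c • (c⁻¹ • (v + z)) - z = v
      rw [smul_smul, mul_inv_cancel₀ hc.ne', one_smul]
      abel
  obtain ⟨x, y, hy, hxy⟩ := MintyAux.minty_zero S hSmono hSmax
  obtain ⟨w, hw, rfl⟩ := hy
  refine ⟨(x, w), ⟨hw, ?_⟩, ?_⟩
  · have : x + (c • w - z) = 0 := hxy
    have h2 : z = x + c • w := by
      have := congrArg (· + z) this
      simpa [add_assoc, sub_add_cancel] using this.symm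
    exact h2
  · rintro ⟨x', w'⟩ ⟨hw', hz'⟩
    have hz : z = x + c • w := by
      have := congrArg (· + z) hxy
      simpa [add_assoc, sub_add_cancel] using this.symm
    have hmono2 := hmono x' x w' w hw' hw
    have hd : x' - x = c • (w - w') := by
      have : x + c • w = x' + c • w' := by rw [← hz, ← hz']
      have h3 : x' - x = c • w - c • w' := by
        calc x' - x = x' + c • w' - c • w' - x := by abel
          _ = x + c • w - c • w' - x := by rw [← this]
          _ = c • w - c • w' := by abel
      rw [h3, smul_sub]
    have hip : (inner ℝ (x' - x) (w' - w) : ℝ) = -(c * ‖w - w'‖ ^ 2) := by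
      rw [hd, real_inner_smul_left]
      have : (inner ℝ (w - w') (w' - w) : ℝ) = -‖w - w'‖ ^ 2 := by
        rw [show w' - w = -(w - w') by abel, inner_neg_right,
          real_inner_self_eq_norm_sq]
      rw [this]; ring
    have hw0 : w - w' = 0 := by
      rw [hip] at hmono2
      have : ‖w - w'‖ ^ 2 ≤ 0 := by nlinarith
      have h4 : ‖w - w'‖ ^ 2 = 0 := le_antisymm this (sq_nonneg _)
      rwa [sq_eq_zero_iff, norm_eq_zero] at h4
    have hww : w = w' := sub_eq_zero.mp hw0
    have hxx : x' = x := by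
      rw [hw0] at hd
      rw [smul_zero] at hd
      exact sub_eq_zero.mp hd
    simp only [Prod.mk.injEq]
    exact ⟨hxx, hww.symm⟩
end

section
/- Let T: H → 2^H be maximal monotone with T^{-1}(0) = {z*}, and suppose T^{-1} is Lipschitz continuous at 0 with modulus a > 0: there is τ > 0 such that ‖z − z*‖ ≤ a‖w‖ whenever z ∈ T^{-1}(w) and ‖w‖ ≤ τ. Then for c > 0 and any z ∈ H with ‖c^{-1}(z − J_{cT}(z))‖ ≤ τ, it holds that ‖J_{cT}(z) − z*‖ ≤ (a/√(a² + c²)) ‖z − z*‖. -/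
/-- Lemma 3.1: If T⁻¹ is Lipschitz continuous at 0 with modulus a, then the resolvent satisfies
a sharp contraction bound toward the unique zero z*. -/
theorem resolvent_contraction_of_inv_lipschitz
    {H : Type*} [NormedAddCommGroup H] [InnerProductSpace ℝ H]
    (T : H → Set H)
    (hmono : ∀ z z' w w', w ∈ T z → w' ∈ T z' → 0 ≤ (inner ℝ (z - z') (w - w') : ℝ))
    (hmax : ∀ z w, (∀ z' w', w' ∈ T z' → 0 ≤ (inner ℝ (z - z') (w - w') : ℝ)) → w ∈ T z)
    (zstar : H) (hzstar : (0 : H) ∈ T zstar)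
    (huniq : ∀ z, (0 : H) ∈ T z → z = zstar)
    (a τ : ℝ) (ha : 0 < a) (hτ : 0 < τ)
    (hlip : ∀ z w, w ∈ T z → ‖w‖ ≤ τ → ‖z - zstar‖ ≤ a * ‖w‖)
    (c : ℝ) (hc : 0 < c)
    (J : H → H) (hJ : ∀ z, c⁻¹ • (z - J z) ∈ T (J z)) :
    ∀ z : H, ‖c⁻¹ • (z - J z)‖ ≤ τ →
      ‖J z - zstar‖ ≤ a / Real.sqrt (a ^ 2 + c ^ 2) * ‖z - zstar‖ := by
  intro z hzτ
  set w : H := c⁻¹ • (z - J z) with hwdef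
  set u : H := J z - zstar with hudef
  have hw : w ∈ T (J z) := hJ z
  have hlipz : ‖u‖ ≤ a * ‖w‖ := hlip (J z) w hw hzτ
  have hmono' : (0 : ℝ) ≤ inner ℝ (J z - zstar) (w - 0) := hmono (J z) zstar w 0 hw hzstar
  have hip : (0 : ℝ) ≤ inner ℝ u w := by simpa using hmono'
  have hcw : c • w = z - J z := by
    rw [hwdef, smul_smul, mul_inv_cancel₀ hc.ne', one_smul]
  have hdecomp : z - zstar = u + c • w := by
    rw [hudef, hcw]; abel
  have hexp : ‖z - zstar‖ ^ 2 = ‖u‖ ^ 2 + 2 * (c * inner ℝ u w) + c ^ 2 * ‖w‖ ^ 2 := by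
    rw [hdecomp, @norm_add_sq_real, real_inner_smul_right, norm_smul, Real.norm_eq_abs,
      abs_of_pos hc, mul_pow]
  -- key squared inequality
  have hkey : (a ^ 2 + c ^ 2) * ‖u‖ ^ 2 ≤ a ^ 2 * ‖z - zstar‖ ^ 2 := by
    have husq : ‖u‖ ^ 2 ≤ a ^ 2 * ‖w‖ ^ 2 := by
      nlinarith [norm_nonneg u, norm_nonneg w, mul_le_mul hlipz hlipz (norm_nonneg u) (by positivity : (0:ℝ) ≤ a * ‖w‖)]
    have hcip : 0 ≤ c * inner ℝ u w := mul_nonneg hc.le hip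
    nlinarith [husq, hcip, sq_nonneg c]
  have hs : 0 < a ^ 2 + c ^ 2 := by positivity
  have hsq : Real.sqrt (a ^ 2 + c ^ 2) > 0 := Real.sqrt_pos.mpr hs
  rw [div_mul_eq_mul_div, le_div_iff₀ hsq]
  have h1 : (‖u‖ * Real.sqrt (a ^ 2 + c ^ 2)) ^ 2 ≤ (a * ‖z - zstar‖) ^ 2 := by
    rw [mul_pow, mul_pow, Real.sq_sqrt hs.le]
    nlinarith [hkey]
  have h2 := Real.sqrt_le_sqrt h1
  rwa [Real.sqrt_sq (by positivity), Real.sqrt_sq (by positivity)] at h2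
end

section
/- Let T be maximal monotone with zero z*, suppose there exist a > 0, τ > 0 with ‖J_{cT}(z) − z*‖ ≤ (a/√(a²+c²))‖z − z*‖ whenever ‖c^{-1}(z − J_{cT}(z))‖ ≤ τ. Let γ ∈ (0,2), c ≥ κ > 0, and suppose z satisfies ‖c^{-1}(z − J_{cT}(z))‖ ≤ τ. Then z⁺ := z − γ(z − J_{cT}(z)) satisfies ‖z⁺ − z*‖² ≤ ϱ‖z − z*‖² with ϱ = 1 − min(γ, 2γ − γ²)·c²/(a² + c²), and 0 < ϱ < 1. -/
private lemma ppa_real_key (A B U P γ s2 : ℝ)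
    (hA0 : 0 ≤ A) (hB0 : 0 ≤ B) (hU0 : 0 ≤ U) (hP : 0 ≤ P)
    (hγ0 : 0 < γ) (hγ2 : γ < 2) (hs2pos : 0 < s2) (hs2lt : s2 < 1)
    (hAexp : A ^ 2 = B ^ 2 + 2 * P + U ^ 2)
    (hBsq : B ^ 2 ≤ s2 * A ^ 2) :
    B ^ 2 + 2 * (1 - γ) * P + (1 - γ) ^ 2 * U ^ 2 ≤
      (1 - min γ (2 * γ - γ ^ 2) * (1 - s2)) * A ^ 2 := by
  rcases le_total γ 1 with h1 | h1
  · rw [min_eq_left (by nlinarith)]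
    nlinarith [mul_nonneg (sub_nonneg.mpr h1) hP, sq_nonneg (1 - γ),
      mul_nonneg (mul_nonneg (sub_nonneg.mpr h1) hγ0.le) (sq_nonneg U),
      mul_le_mul_of_nonneg_left hBsq hγ0.le, mul_nonneg hγ0.le hP]
  · rw [min_eq_right (by nlinarith)]
    have hcoef : 0 ≤ 2 * γ - γ ^ 2 := by nlinarith
    nlinarith [mul_nonneg (sub_nonneg.mpr h1) hP, sq_nonneg (1 - γ),
      mul_nonneg (mul_nonneg (sub_nonneg.mpr h1) (sub_nonneg.mpr h1)) hP,
      mul_le_mul_of_nonneg_left hBsq hcoef]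

set_option maxHeartbeats 1000000 in
/-- One-step optimal linear contraction of the generalized PPA. -/
theorem generalized_ppa_linear_rate
    {H : Type*} [NormedAddCommGroup H] [InnerProductSpace ℝ H]
    (T : H → Set H)
    (hmono : ∀ z z' w w', w ∈ T z → w' ∈ T z' → 0 ≤ (inner ℝ (z - z') (w - w') : ℝ))
    (hmax : ∀ z w, (∀ z' w', w' ∈ T z' → 0 ≤ (inner ℝ (z - z') (w - w') : ℝ)) → w ∈ T z)
    (zstar : H) (hzstar : (0 : H) ∈ T zstar)
    (a τ : ℝ) (ha : 0 < a) (hτ : 0 < τ)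
    (c κ : ℝ) (hκ : 0 < κ) (hcκ : κ ≤ c)
    (J : H → H) (hJ : ∀ z, c⁻¹ • (z - J z) ∈ T (J z))
    (hres : ∀ z : H, ‖c⁻¹ • (z - J z)‖ ≤ τ →
      ‖J z - zstar‖ ≤ a / Real.sqrt (a ^ 2 + c ^ 2) * ‖z - zstar‖)
    (γ : ℝ) (hγ : γ ∈ Set.Ioo (0 : ℝ) 2)
    (z : H) (hz : ‖c⁻¹ • (z - J z)‖ ≤ τ) :
    ‖(z - γ • (z - J z)) - zstar‖ ^ 2 ≤
      (1 - min γ (2 * γ - γ ^ 2) * (c ^ 2 / (a ^ 2 + c ^ 2))) * ‖z - zstar‖ ^ 2 ∧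
    0 < 1 - min γ (2 * γ - γ ^ 2) * (c ^ 2 / (a ^ 2 + c ^ 2)) ∧
    1 - min γ (2 * γ - γ ^ 2) * (c ^ 2 / (a ^ 2 + c ^ 2)) < 1 := by
  obtain ⟨hγ0, hγ2⟩ := hγ
  have hc : 0 < c := lt_of_lt_of_le hκ hcκ
  have hac : (0:ℝ) < a ^ 2 + c ^ 2 := by positivity
  set y : H := J z - zstar with hy
  set u : H := z - J z with hu
  set A := ‖z - zstar‖ with hA
  set B := ‖y‖ with hB
  set U := ‖u‖ with hU
  set P : ℝ := inner ℝ y u with hPdef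
  have hP : 0 ≤ P := by
    have h := hmono (J z) zstar (c⁻¹ • (z - J z)) 0 (hJ z) hzstar
    rw [sub_zero, inner_smul_right] at h
    have h' : 0 ≤ c⁻¹ * P := h
    nlinarith [inv_pos.mpr hc]
  have hdec : z - zstar = y + u := by rw [hy, hu]; abel
  have hAexp : A ^ 2 = B ^ 2 + 2 * P + U ^ 2 := by
    rw [hA, hdec, norm_add_sq_real, hB, hU, hPdef]
  have hdec2 : z - γ • (z - J z) - zstar = y + (1 - γ) • u := by
    rw [hy, hu]; module
  have hLexp : ‖z - γ • (z - J z) - zstar‖ ^ 2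
      = B ^ 2 + 2 * (1 - γ) * P + (1 - γ) ^ 2 * U ^ 2 := by
    rw [hdec2, norm_add_sq_real, real_inner_smul_right, norm_smul, Real.norm_eq_abs,
      mul_pow, sq_abs, hB, hU, hPdef]
    ring
  have hs : B ≤ a / Real.sqrt (a ^ 2 + c ^ 2) * A := hres z hz
  have hsq : Real.sqrt (a ^ 2 + c ^ 2) ^ 2 = a ^ 2 + c ^ 2 := Real.sq_sqrt hac.le
  have hsqpos : 0 < Real.sqrt (a ^ 2 + c ^ 2) := Real.sqrt_pos.mpr hac
  have hA0 : 0 ≤ A := norm_nonneg _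
  have hU0 : 0 ≤ U := norm_nonneg _
  have hB0 : 0 ≤ B := norm_nonneg _
  have hBsq : B ^ 2 ≤ a ^ 2 / (a ^ 2 + c ^ 2) * A ^ 2 := by
    have h1 : B ^ 2 ≤ (a / Real.sqrt (a ^ 2 + c ^ 2) * A) ^ 2 := by
      nlinarith [mul_nonneg (div_nonneg ha.le hsqpos.le) hA0]
    calc B ^ 2 ≤ (a / Real.sqrt (a ^ 2 + c ^ 2) * A) ^ 2 := h1
      _ = a ^ 2 / (a ^ 2 + c ^ 2) * A ^ 2 := by rw [mul_pow, div_pow, hsq]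
  have hs2pos : 0 < a ^ 2 / (a ^ 2 + c ^ 2) := by positivity
  have hs2lt : a ^ 2 / (a ^ 2 + c ^ 2) < 1 := by
    rw [div_lt_one hac]; nlinarith
  have hfrac : c ^ 2 / (a ^ 2 + c ^ 2) = 1 - a ^ 2 / (a ^ 2 + c ^ 2) := by
    field_simp
    ring
  have hfracpos : 0 < c ^ 2 / (a ^ 2 + c ^ 2) := by positivity
  have hmain : ‖z - γ • (z - J z) - zstar‖ ^ 2 ≤
      (1 - min γ (2 * γ - γ ^ 2) * (c ^ 2 / (a ^ 2 + c ^ 2))) * A ^ 2 := by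
    rw [hLexp, hfrac]
    exact ppa_real_key A B U P γ (a ^ 2 / (a ^ 2 + c ^ 2)) hA0 hB0 hU0 hP hγ0 hγ2
      hs2pos hs2lt hAexp hBsq
  have hmin_pos : 0 < min γ (2 * γ - γ ^ 2) := lt_min hγ0 (by nlinarith)
  have hmin_le1 : min γ (2 * γ - γ ^ 2) ≤ 1 := le_trans (min_le_right _ _) (by nlinarith)
  have hfraclt1 : c ^ 2 / (a ^ 2 + c ^ 2) < 1 := by rw [hfrac]; linarith
  refine ⟨hmain, ?_, ?_⟩
  · nlinarith [mul_le_one₀ hmin_le1 hfracpos.le hfraclt1.le]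
  · nlinarith [mul_pos hmin_pos hfracpos]
end

section
/- Let G: H → H be Lipschitz continuous with constant L_G < 1 and let z* be its unique fixed point. Let c ≥ κ > 0 with c ≤ ς. If G = J_{cT} for a maximal monotone T (so z* is the unique zero of T), then for any z ∈ H with z̃ := J_{cT}(z): ‖z̃ − z*‖² ≤ ((2L_G − L_G²)/(1−L_G)²)·ς²·‖c^{-1}(z − z̃)‖². -/
/-- If the resolvent G = J_{cT} is L_G-Lipschitz with L_G < 1 and fixed point z*, then T⁻¹ is
Lipschitz at the shadow sequence: ‖z̃ - z*‖² ≤ ((2L_G - L_G²)/(1-L_G)²)·ς²·‖c⁻¹(z - z̃)‖². -/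
theorem inv_lipschitz_of_resolvent_contraction
    {H : Type*} [NormedAddCommGroup H] [InnerProductSpace ℝ H]
    (T : H → Set H)
    (hmono : ∀ z z' w w', w ∈ T z → w' ∈ T z' → 0 ≤ (inner ℝ (z - z') (w - w') : ℝ))
    (hmax : ∀ z w, (∀ z' w', w' ∈ T z' → 0 ≤ (inner ℝ (z - z') (w - w') : ℝ)) → w ∈ T z)
    (c κ ς : ℝ) (hκ : 0 < κ) (hcκ : κ ≤ c) (hcς : c ≤ ς)
    (G : H → H) (hG : ∀ z, c⁻¹ • (z - G z) ∈ T (G z))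
    (L_G : ℝ) (hL0 : 0 ≤ L_G) (hL1 : L_G < 1)
    (hlip : ∀ z z', ‖G z - G z'‖ ≤ L_G * ‖z - z'‖)
    (zstar : H) (hfix : G zstar = zstar)
    (huniq : ∀ z, G z = z → z = zstar) :
    ∀ z : H, ‖G z - zstar‖ ^ 2 ≤
      (2 * L_G - L_G ^ 2) / (1 - L_G) ^ 2 * ς ^ 2 * ‖c⁻¹ • (z - G z)‖ ^ 2 := by
  intro z
  have hc : 0 < c := lt_of_lt_of_le hκ hcκ
  have hci : 0 < c⁻¹ := inv_pos.mpr hc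
  have h0T : (0 : H) ∈ T zstar := by
    have h := hG zstar
    rwa [hfix, sub_self, smul_zero] at h
  have hinner : 0 ≤ (inner ℝ (G z - zstar) (z - G z) : ℝ) := by
    have h := hmono (G z) zstar (c⁻¹ • (z - G z)) 0 (hG z) h0T
    rw [sub_zero, real_inner_smul_right] at h
    nlinarith
  have hexp : ‖z - zstar‖ ^ 2
      = ‖z - G z‖ ^ 2 + 2 * (inner ℝ (z - G z) (G z - zstar) : ℝ) + ‖G z - zstar‖ ^ 2 := by
    have e : z - zstar = (z - G z) + (G z - zstar) := by abel
    rw [e, norm_add_sq_real]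
  have hb2 : ‖G z - zstar‖ ^ 2 ≤ ‖z - zstar‖ ^ 2 - ‖z - G z‖ ^ 2 := by
    rw [real_inner_comm] at hexp
    nlinarith
  have hblip : ‖G z - zstar‖ ≤ L_G * ‖z - zstar‖ := by
    simpa [hfix] using hlip z zstar
  have ha : (1 - L_G) * ‖z - zstar‖ ≤ ‖z - G z‖ := by
    have htri : ‖z - zstar‖ ≤ ‖z - G z‖ + ‖G z - zstar‖ := by
      have := norm_sub_le_norm_sub_add_norm_sub z (G z) zstar
      linarith [norm_sub_le (z - G z) (zstar - G z)]
    nlinarith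
  have has : ((1 - L_G) * ‖z - zstar‖) ^ 2 ≤ ‖z - G z‖ ^ 2 := by
    have h1 : 0 ≤ (1 - L_G) * ‖z - zstar‖ :=
      mul_nonneg (by linarith) (norm_nonneg _)
    nlinarith
  have hkey : ‖G z - zstar‖ ^ 2 * (1 - L_G) ^ 2
      ≤ (2 * L_G - L_G ^ 2) * ‖z - G z‖ ^ 2 := by
    nlinarith [sq_nonneg (‖z - G z‖), sq_nonneg (1 - L_G), hb2, has,
      mul_le_mul_of_nonneg_left hb2 (sq_nonneg (1 - L_G))]
  have hs2 : (0:ℝ) < (1 - L_G) ^ 2 := by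
    have : (0:ℝ) < 1 - L_G := by linarith
    positivity
  have hnorm : ‖c⁻¹ • (z - G z)‖ = c⁻¹ * ‖z - G z‖ := by
    rw [norm_smul, Real.norm_eq_abs, abs_of_pos hci]
  have hς : 1 ≤ (ς * c⁻¹) ^ 2 := by
    have h1 : 1 ≤ ς * c⁻¹ := by
      rw [← div_eq_mul_inv, le_div_iff₀ hc]
      linarith
    nlinarith
  rw [hnorm, div_mul_eq_mul_div, div_mul_eq_mul_div, le_div_iff₀ hs2]
  have hL2 : 0 ≤ 2 * L_G - L_G ^ 2 := by nlinarith
  nlinarith [hkey, hς, mul_nonneg hL2 (sq_nonneg ‖z - G z‖), sq_nonneg ‖z - G z‖,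
    mul_le_mul_of_nonneg_left hς (mul_nonneg hL2 (sq_nonneg ‖z - G z‖))]
end
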